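/- Let L(z) = M_T(z/2)·M_V(z)·M_T(z/2) be the leapfrog matrix for the harmonic oscillator, and let α₁ = 1/(2 − 2^{1/3}·exp(2πi/3)), α₂ = 1 − 2α₁ (the complex triple-jump coefficients with k = 1). Then the palindromic composition T(h) = L(α₁ h)·L(α₂ h)·L(α₁ h) satisfies: (fun h : ℝ => T(h) − M_H(h)) is O(h⁵) as h → 0, i.e. the complex triple-jump composition S_{α₁h} ∘ S_{α₂h} ∘ S_{α₁h} is a method of order 4. -/

import Mathlib

open Matrix Asymptotics Filter

attribute [local instance] Matrix.normedAddCommGroup Matrix.normedSpace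

/-- Exact evolution matrix of the harmonic oscillator `q' = p`, `p' = -q`. -/
noncomputable def MH (z : ℂ) : Matrix (Fin 2) (Fin 2) ℂ :=
  !![Complex.cos z, Complex.sin z; -Complex.sin z, Complex.cos z]

/-- Exact evolution matrix of the kinetic part. -/
def MT (z : ℂ) : Matrix (Fin 2) (Fin 2) ℂ := !![1, z; 0, 1]

/-- Exact evolution matrix of the potential part. -/
def MV (z : ℂ) : Matrix (Fin 2) (Fin 2) ℂ := !![1, 0; -z, 1]

/-- The leapfrog/Strang splitting matrix. -/
noncomputable def L (z : ℂ) : Matrix (Fin 2) (Fin 2) ℂ := MT (z / 2) * MV z * MT (z / 2)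

/-- The complex triple-jump coefficient `α₁ = 1/(2 − 2^{1/3} e^{2πi/3})` (`k = 1`). -/
noncomputable def β₁ : ℂ :=
  (2 - ((2 : ℝ) ^ ((1 : ℝ) / 3) : ℝ) * Complex.exp (2 * Real.pi * Complex.I / 3))⁻¹

/-- The coefficient `α₂ = 1 − 2α₁`. -/
noncomputable def β₂ : ℂ := 1 - 2 * β₁

/-- The complex triple-jump palindromic composition `S_{α₁h} ∘ S_{α₂h} ∘ S_{α₁h}`. -/
noncomputable def Tjump (h : ℝ) : Matrix (Fin 2) (Fin 2) ℂ :=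
  L (β₁ * (h : ℂ)) * L (β₂ * (h : ℂ)) * L (β₁ * (h : ℂ))

/-- entries of L -/
lemma L_eq (z : ℂ) : L z = !![1 - z^2/2, z - z^3/4; -z, 1 - z^2/2] := by
  unfold L MT MV
  ext i j
  fin_cases i <;> fin_cases j <;>
    simp [Matrix.mul_apply, Fin.sum_univ_two] <;> ring

lemma beta_cube : 2 * β₁ ^ 3 + β₂ ^ 3 = 0 := by
  set c : ℂ := ((2 : ℝ) ^ ((1 : ℝ) / 3) : ℝ) * Complex.exp (2 * Real.pi * Complex.I / 3) with hc
  have hb1 : β₁ = (2 - c)⁻¹ := rfl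
  have hc3 : c ^ 3 = 2 := by
    rw [hc, mul_pow, ← Complex.exp_nat_mul]
    have h1 : ((((2:ℝ) ^ ((1:ℝ)/3) : ℝ) : ℂ)) ^ 3 = (((2:ℝ) ^ ((1:ℝ)/3)) ^ (3:ℕ) : ℝ) := by
      push_cast; ring
    have h2 : ((2:ℝ) ^ ((1:ℝ)/3)) ^ (3:ℕ) = 2 := by
      rw [← Real.rpow_natCast ((2:ℝ) ^ ((1:ℝ)/3)) 3, ← Real.rpow_mul (by norm_num)]
      norm_num
    have h3 : ((3:ℕ):ℂ) * (2 * Real.pi * Complex.I / 3) = 2 * Real.pi * Complex.I := by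
      push_cast; ring
    rw [h1, h2, h3, Complex.exp_two_pi_mul_I]
    norm_num
  have hne : (2 : ℂ) - c ≠ 0 := by
    intro H
    have harg : 2 * (Real.pi : ℂ) * Complex.I / 3 = ((2 * Real.pi / 3 : ℝ) : ℂ) * Complex.I := by
      push_cast; ring
    have H' := congrArg Complex.im H
    rw [Complex.sub_im, Complex.zero_im, hc, harg, Complex.im_ofReal_mul,
      Complex.exp_ofReal_mul_I_im] at H'
    have hpos : 0 < ((2:ℝ) ^ ((1:ℝ)/3)) * Real.sin (2 * Real.pi / 3) := by
      apply mul_pos (Real.rpow_pos_of_pos (by norm_num) _)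
      apply Real.sin_pos_of_pos_of_lt_pi
      · positivity
      · nlinarith [Real.pi_pos]
    norm_num at H'
    rw [H', mul_zero] at hpos
    exact lt_irrefl _ hpos
  have hb2' : β₂ = -c * (2 - c)⁻¹ := by
    rw [β₂, hb1]
    field_simp
    ring
  have hkey : 2 * β₁ ^ 3 + β₂ ^ 3 = (2 - c^3) * ((2 - c)⁻¹)^3 := by
    rw [hb1, hb2']; ring
  rw [hkey, hc3]
  ring

/-- the polynomial tails -/
noncomputable def q11 (a z : ℂ) : ℂ :=
  (-1/8*a^3 + 1/2*a^4 - 5/8*a^5 + 1/4*a^6) * z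
noncomputable def q12 (a z : ℂ) : ℂ :=
  (1/4*a^2 - 3/4*a^3 + 3/4*a^4 - 1/4*a^5) + (-1/16*a^4 + 1/4*a^5 - 5/16*a^6 + 1/8*a^7) * z^2
noncomputable def q21 (a : ℂ) : ℂ := -1/4*a^2 + a^3 - 5/4*a^4 + 1/2*a^5

lemma key (a b z : ℂ) (hb : b = 1 - 2*a) (hcu : 2*a^3 + b^3 = 0) :
    !![1 - (a*z)^2/2, a*z - (a*z)^3/4; -(a*z), 1 - (a*z)^2/2] *
      !![1 - (b*z)^2/2, b*z - (b*z)^3/4; -(b*z), 1 - (b*z)^2/2] *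
      !![1 - (a*z)^2/2, a*z - (a*z)^3/4; -(a*z), 1 - (a*z)^2/2] =
    !![1 - z^2/2 + z^4/24 + z^5 * q11 a z, z - z^3/6 + z^5 * q12 a z;
       -z + z^3/6 + z^5 * q21 a, 1 - z^2/2 + z^4/24 + z^5 * q11 a z] := by
  subst hb
  unfold q11 q12 q21
  ext i j
  fin_cases i <;> fin_cases j <;>
    simp [Matrix.mul_apply, Fin.sum_univ_two]
  · linear_combination (-(z^4)/24) * hcu
  · linear_combination (-(z^3)/12) * hcu
  · linear_combination (-(z^3)/6) * hcu
  · linear_combination (-(z^4)/24) * hcu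

lemma exp_tail (h : ℝ) (hh : |h| ≤ 1) (x : ℂ) (hx : ‖x‖ = |h|) :
    ‖(Complex.exp x - ∑ m ∈ Finset.range 6, x ^ m / m.factorial)‖ ≤ |h| ^ 6 := by
  have e1 := Complex.exp_bound (x := x) (by rw [hx]; exact hh) (by norm_num : (0:ℕ) < 6)
  rw [hx] at e1
  refine le_trans e1 ?_
  have h6 : (0:ℝ) ≤ |h| ^ 6 := by positivity
  have : ((Nat.succ 6 : ℕ) : ℝ) * (((6:ℕ).factorial * (6:ℕ) : ℝ))⁻¹ ≤ 1 := by
    norm_num [Nat.factorial]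
  nlinarith

lemma exp_tail5 (h : ℝ) (hh : |h| ≤ 1) (x : ℂ) (hx : ‖x‖ = |h|) :
    ‖(Complex.exp x - ∑ m ∈ Finset.range 5, x ^ m / m.factorial)‖ ≤ |h| ^ 5 := by
  have e1 := Complex.exp_bound (x := x) (by rw [hx]; exact hh) (by norm_num : (0:ℕ) < 5)
  rw [hx] at e1
  refine le_trans e1 ?_
  have h5 : (0:ℝ) ≤ |h| ^ 5 := by positivity
  have : ((Nat.succ 5 : ℕ) : ℝ) * (((5:ℕ).factorial * (5:ℕ) : ℝ))⁻¹ ≤ 1 := by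
    norm_num [Nat.factorial]
  nlinarith

lemma cos_taylor :
    (fun h : ℝ => Complex.cos (h : ℂ) - (1 - (h:ℂ)^2/2 + (h:ℂ)^4/24)) =O[nhds 0]
      fun h : ℝ => h ^ 5 := by
  rw [isBigO_iff]
  refine ⟨1, ?_⟩
  filter_upwards [Metric.ball_mem_nhds (0:ℝ) one_pos] with h hh
  rw [Metric.mem_ball, Real.dist_eq, sub_zero] at hh
  set x : ℂ := (h:ℂ) * Complex.I with hxdef
  have habs : ‖x‖ = |h| := by
    rw [hxdef, norm_mul, Complex.norm_real, Complex.norm_I, mul_one, Real.norm_eq_abs]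
  have habs' : ‖-x‖ = |h| := by rw [norm_neg]; exact habs
  have e1 := exp_tail h hh.le x habs
  have e2 := exp_tail h hh.le (-x) habs'
  have hsum : ((∑ m ∈ Finset.range 6, x ^ m / m.factorial) +
      ∑ m ∈ Finset.range 6, (-x) ^ m / m.factorial) / 2
      = 1 - (h:ℂ)^2/2 + (h:ℂ)^4/24 := by
    rw [hxdef]
    simp [Finset.sum_range_succ, Nat.factorial]
    ring_nf
    linear_combination ((h:ℂ)^2/2 + (h:ℂ)^4*(Complex.I^2 - 1)/24) * Complex.I_sq
  have hcos : Complex.cos (h:ℂ) = (Complex.exp x + Complex.exp (-x)) / 2 := by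
    rw [Complex.cos, hxdef]; ring_nf
  have key : Complex.cos (h:ℂ) - (1 - (h:ℂ)^2/2 + (h:ℂ)^4/24) =
      ((Complex.exp x - ∑ m ∈ Finset.range 6, x ^ m / m.factorial) +
       (Complex.exp (-x) - ∑ m ∈ Finset.range 6, (-x) ^ m / m.factorial)) / 2 := by
    rw [hcos, ← hsum]; ring
  rw [key]
  rw [Real.norm_eq_abs, abs_pow]
  have htri := norm_add_le (Complex.exp x - ∑ m ∈ Finset.range 6, x ^ m / m.factorial)
    (Complex.exp (-x) - ∑ m ∈ Finset.range 6, (-x) ^ m / m.factorial)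
  rw [norm_div]
  have h2 : ‖(2:ℂ)‖ = 2 := by norm_num
  rw [h2]
  have h56 : |h| ^ 6 ≤ |h| ^ 5 :=
    pow_le_pow_of_le_one (abs_nonneg h) hh.le (by norm_num)
  nlinarith [abs_nonneg h]

lemma sin_taylor :
    (fun h : ℝ => Complex.sin (h : ℂ) - ((h:ℂ) - (h:ℂ)^3/6)) =O[nhds 0]
      fun h : ℝ => h ^ 5 := by
  rw [isBigO_iff]
  refine ⟨1, ?_⟩
  filter_upwards [Metric.ball_mem_nhds (0:ℝ) one_pos] with h hh
  rw [Metric.mem_ball, Real.dist_eq, sub_zero] at hh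
  set x : ℂ := (h:ℂ) * Complex.I with hxdef
  have habs : ‖x‖ = |h| := by
    rw [hxdef, norm_mul, Complex.norm_real, Complex.norm_I, mul_one, Real.norm_eq_abs]
  have habs' : ‖-x‖ = |h| := by rw [norm_neg]; exact habs
  have e1 := exp_tail5 h hh.le x habs
  have e2 := exp_tail5 h hh.le (-x) habs'
  have hsum : ((∑ m ∈ Finset.range 5, (-x) ^ m / m.factorial) -
      ∑ m ∈ Finset.range 5, x ^ m / m.factorial) * Complex.I / 2
      = (h:ℂ) - (h:ℂ)^3/6 := by
    rw [hxdef]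
    simp [Finset.sum_range_succ, Nat.factorial]
    ring_nf
    linear_combination (-(h:ℂ) - (h:ℂ)^3*(Complex.I^2 - 1)/6) * Complex.I_sq
  have hsin : Complex.sin (h:ℂ) = (Complex.exp (-x) - Complex.exp x) * Complex.I / 2 := by
    rw [Complex.sin, hxdef]; ring_nf
  have key : Complex.sin (h:ℂ) - ((h:ℂ) - (h:ℂ)^3/6) =
      ((Complex.exp (-x) - ∑ m ∈ Finset.range 5, (-x) ^ m / m.factorial) -
       (Complex.exp x - ∑ m ∈ Finset.range 5, x ^ m / m.factorial)) * Complex.I / 2 := by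
    rw [hsin, ← hsum]; ring
  rw [key]
  rw [Real.norm_eq_abs, abs_pow]
  have htri := norm_sub_le (Complex.exp (-x) - ∑ m ∈ Finset.range 5, (-x) ^ m / m.factorial)
    (Complex.exp x - ∑ m ∈ Finset.range 5, x ^ m / m.factorial)
  rw [norm_div, norm_mul, Complex.norm_I, mul_one]
  have h2 : ‖(2:ℂ)‖ = 2 := by norm_num
  rw [h2]
  nlinarith [abs_nonneg h]

lemma tail_isBigO (Q : ℂ → ℂ) (hQ : Continuous Q) :
    (fun h : ℝ => (h:ℂ)^5 * Q (h:ℂ)) =O[nhds 0] fun h : ℝ => h ^ 5 := by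
  have h1 : (fun h : ℝ => ((h:ℂ))^5) =O[nhds 0] (fun h : ℝ => h ^ 5) := by
    apply isBigO_of_le
    intro x
    simp [norm_pow, Complex.norm_real]
  have h2 : (fun h : ℝ => Q (h:ℂ)) =O[nhds 0] (fun _ : ℝ => (1:ℝ)) := by
    have ht : Tendsto (fun h : ℝ => Q (h:ℂ)) (nhds 0) (nhds (Q 0)) := by
      have := (hQ.comp Complex.continuous_ofReal).tendsto 0
      exact this
    exact ht.isBigO_one ℝ
  have := h1.mul h2
  simpa using this

lemma entry_smul_isBigO {f : ℝ → ℂ} (M : Matrix (Fin 2) (Fin 2) ℂ)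
    (hf : f =O[nhds 0] fun h : ℝ => h ^ 5) :
    (fun h : ℝ => f h • M) =O[nhds 0] fun h : ℝ => h ^ 5 := by
  refine IsBigO.trans ?_ hf
  rw [isBigO_iff]
  refine ⟨‖M‖, Eventually.of_forall fun x => ?_⟩
  rw [norm_smul, mul_comm]

lemma matrix_isBigO {f11 f12 f21 f22 : ℝ → ℂ}
    (h11 : f11 =O[nhds 0] fun h : ℝ => h ^ 5)
    (h12 : f12 =O[nhds 0] fun h : ℝ => h ^ 5)
    (h21 : f21 =O[nhds 0] fun h : ℝ => h ^ 5)
    (h22 : f22 =O[nhds 0] fun h : ℝ => h ^ 5) :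
    (fun h : ℝ => !![f11 h, f12 h; f21 h, f22 h]) =O[nhds 0] fun h : ℝ => h ^ 5 := by
  have hdecomp : (fun h : ℝ => !![f11 h, f12 h; f21 h, f22 h]) =
      fun h : ℝ => f11 h • !![1,0;0,0] + f12 h • !![0,1;0,0] +
        f21 h • !![0,0;1,0] + f22 h • !![0,0;0,1] := by
    funext h
    ext i j
    fin_cases i <;> fin_cases j <;> simp
  rw [hdecomp]
  exact (((entry_smul_isBigO _ h11).add (entry_smul_isBigO _ h12)).add
    (entry_smul_isBigO _ h21)).add (entry_smul_isBigO _ h22)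


/-- the complex triple-jump composition `S_{α₁h} ∘ S_{α₂h} ∘ S_{α₁h}`
is a method of order 4 for the harmonic oscillator. -/
theorem complex_triple_jump_order_four :
    (fun h : ℝ => Tjump h - MH (h : ℂ)) =O[nhds 0] fun h : ℝ => h ^ 5 := by
  have hb : β₂ = 1 - 2 * β₁ := rfl
  have hT : ∀ h : ℝ, Tjump h - MH (h:ℂ) =
      !![((h:ℂ)^5 * q11 β₁ (h:ℂ)) - (Complex.cos (h:ℂ) - (1 - (h:ℂ)^2/2 + (h:ℂ)^4/24)),
         ((h:ℂ)^5 * q12 β₁ (h:ℂ)) - (Complex.sin (h:ℂ) - ((h:ℂ) - (h:ℂ)^3/6));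
         ((h:ℂ)^5 * q21 β₁) + (Complex.sin (h:ℂ) - ((h:ℂ) - (h:ℂ)^3/6)),
         ((h:ℂ)^5 * q11 β₁ (h:ℂ)) - (Complex.cos (h:ℂ) - (1 - (h:ℂ)^2/2 + (h:ℂ)^4/24))] := by
    intro h
    rw [Tjump]; simp only [L_eq]; rw [key β₁ β₂ (h:ℂ) hb beta_cube, MH]
    ext i j
    fin_cases i <;> fin_cases j <;> simp <;> ring
  rw [funext hT]
  apply matrix_isBigO
  · exact (tail_isBigO (q11 β₁) (by unfold q11; continuity)).sub cos_taylor
  · exact (tail_isBigO (q12 β₁) (by unfold q12; continuity)).sub sin_taylor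
  · exact (tail_isBigO (fun _ => q21 β₁) continuous_const).add sin_taylor
  · exact (tail_isBigO (q11 β₁) (by unfold q11; continuity)).sub cos_taylor
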